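/- Subdifferential sum rule (Moreau–Rockafellar, everywhere-finite case): if p, q : X → ℝ are sublinear functionals on a real vector space, then ∂(p + q)(0) = ∂p(0) + ∂q(0). -/

import Mathlib

open Pointwise

theorem subdiff_sum_rule {X : Type*} [AddCommGroup X] [Module ℝ X]
    (p q : X → ℝ)
    (hpadd : ∀ x y, p (x + y) ≤ p x + p y)
    (hphom : ∀ (l : ℝ) (x : X), 0 ≤ l → p (l • x) = l * p x)
    (hqadd : ∀ x y, q (x + y) ≤ q x + q y)
    (hqhom : ∀ (l : ℝ) (x : X), 0 ≤ l → q (l • x) = l * q x) :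
    {l : X →ₗ[ℝ] ℝ | ∀ x, l x ≤ p x + q x} =
      {l : X →ₗ[ℝ] ℝ | ∀ x, l x ≤ p x} + {l : X →ₗ[ℝ] ℝ | ∀ x, l x ≤ q x} := by
  have hp0 : p 0 = 0 := by
    have := hphom 0 0 le_rfl; simpa using this
  have hq0 : q 0 = 0 := by
    have := hqhom 0 0 le_rfl; simpa using this
  ext l
  constructor
  · intro hl
    -- extend from the diagonal of X × X
    set d : X →ₗ[ℝ] X × X := LinearMap.prod LinearMap.id LinearMap.id with hd
    set N : X × X → ℝ := fun v => p v.1 + q v.2 with hN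
    have N_hom : ∀ c : ℝ, 0 < c → ∀ v : X × X, N (c • v) = c * N v := by
      intro c hc v
      simp only [hN, Prod.smul_fst, Prod.smul_snd, hphom c v.1 hc.le, hqhom c v.2 hc.le]
      ring
    have N_add : ∀ v w : X × X, N (v + w) ≤ N v + N w := by
      intro v w
      have := add_le_add (hpadd v.1 w.1) (hqadd v.2 w.2)
      simpa [hN, add_assoc, add_left_comm, add_comm] using this
    set f : (X × X) →ₗ.[ℝ] ℝ := (l.comp (LinearMap.fst ℝ X X)).toPMap (LinearMap.range d)
      with hf
    have hfle : ∀ v : f.domain, f v ≤ N (v : X × X) := by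
      rintro ⟨v, x, rfl⟩
      exact hl x
    obtain ⟨g, hg1, hg2⟩ := exists_extension_of_le_sublinear f N N_hom N_add hfle
    refine ⟨g.comp (LinearMap.inl ℝ X X), fun x => ?_,
      g.comp (LinearMap.inr ℝ X X), fun x => ?_, ?_⟩
    · have := hg2 (x, 0); simpa [hN, hq0] using this
    · have := hg2 (0, x); simpa [hN, hp0] using this
    · ext x
      have hx : ((x, x) : X × X) ∈ LinearMap.range d := ⟨x, rfl⟩
      have := hg1 ⟨(x, x), hx⟩
      simp only [hf, LinearMap.toPMap, LinearMap.comp_apply, LinearMap.fst_apply] at this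
      have h2 : g (x, 0) + g (0, x) = g (x, x) := by
        rw [← map_add]; norm_num
      simp only [LinearMap.add_apply, LinearMap.comp_apply, LinearMap.inl_apply,
        LinearMap.inr_apply]
      rw [h2, this]
      rfl
  · rintro ⟨l₁, h1, l₂, h2, rfl⟩
    intro x
    exact add_le_add (h1 x) (h2 x)
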